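/- With step size η = √(ln K / T) and 0 < η ≤ 1/2, the WSU regret satisfies Σ_{t∈[T]} Σ_{j∈[K]} π_{j,t} ℓ_{j,t} - min_{i∈[K]} Σ_{t∈[T]} ℓ_{i,t} ≤ 2√(T ln K). -/

import Mathlib

lemma wsu_key_exp {x : ℝ} (hx : |x| ≤ 1/2) : Real.exp (-x - x^2) ≤ 1 - x := by
  obtain ⟨hxl, hxu⟩ := abs_le.1 hx
  rw [show -x - x^2 = -(x + x^2) by ring, Real.exp_neg, inv_eq_one_div,
    div_le_iff₀ (Real.exp_pos _)]
  rcases le_or_gt 0 x with h | h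
  · have hu : (0:ℝ) ≤ x + x^2 := by nlinarith
    have h1 : 1 + (x + x^2) + (x + x^2)^2/2 ≤ Real.exp (x + x^2) :=
      Real.quadratic_le_exp_of_nonneg hu
    have h2 := mul_le_mul_of_nonneg_left h1 (show (0:ℝ) ≤ 1 - x by linarith)
    nlinarith [sq_nonneg x, sq_nonneg (x*x)]
  · have h1 : (x + x^2) + 1 ≤ Real.exp (x + x^2) := Real.add_one_le_exp _
    have h2 := mul_le_mul_of_nonneg_left h1 (show (0:ℝ) ≤ 1 - x by linarith)
    nlinarith

/-- With step size η = √(ln K / T), WSU has regret at most 2√(T ln K). -/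
theorem wsu_regret_sqrt (K T : ℕ) (hK : 1 ≤ K)
    (ℓ : ℕ → Fin K → ℝ) (hℓ : ∀ t i, ℓ t i ∈ Set.Icc (0:ℝ) 1)
    (η : ℝ) (hηdef : η = Real.sqrt (Real.log K / T))
    (hη0 : 0 < η) (hη2 : η ≤ 1/2)
    (π : ℕ → Fin K → ℝ) (hinit : ∀ i, π 0 i = 1 / K)
    (hupd : ∀ t i, π (t+1) i = π t i * (1 - η * (ℓ t i - ∑ j, π t j * ℓ t j)))
    (istar : Fin K) :
    ∑ t ∈ Finset.range T, ∑ j, π t j * ℓ t j - ∑ t ∈ Finset.range T, ℓ t istar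
      ≤ 2 * Real.sqrt (T * Real.log K) := by
  have hK0 : (0:ℝ) < K := by exact_mod_cast hK
  -- derive log K = η² T and T > 0
  have hlogK : (0:ℝ) ≤ Real.log K := Real.log_nonneg (by exact_mod_cast hK)
  have hη2eq : η ^ 2 = Real.log K / T := by
    rw [hηdef, Real.sq_sqrt (by positivity)]
  have hT0 : (0:ℝ) < T := by
    by_contra h
    push_neg at h
    have : (T:ℝ) = 0 := le_antisymm h (Nat.cast_nonneg T)
    rw [this, div_zero] at hη2eq
    nlinarith
  have hlogeq : Real.log K = η ^ 2 * T := by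
    field_simp at hη2eq
    linarith [hη2eq]
  -- invariant: positivity and sum = 1
  set m : ℕ → ℝ := fun t => ∑ j, π t j * ℓ t j with hm
  have hinv : ∀ t, (∀ i, 0 < π t i) ∧ (∑ i, π t i) = 1 := by
    intro t
    induction t with
    | zero =>
      constructor
      · intro i; rw [hinit]; positivity
      · simp only [hinit]
        rw [Finset.sum_const, Finset.card_univ, Fintype.card_fin]
        rw [nsmul_eq_mul, mul_one_div_cancel hK0.ne']
    | succ t ih =>
      obtain ⟨hpos, hsum⟩ := ih
      have hm0 : 0 ≤ m t := Finset.sum_nonneg fun j _ =>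
        mul_nonneg (hpos j).le (hℓ t j).1
      have hm1 : m t ≤ 1 := by
        calc m t ≤ ∑ j, π t j * 1 :=
              Finset.sum_le_sum fun j _ => mul_le_mul_of_nonneg_left (hℓ t j).2 (hpos j).le
          _ = 1 := by simp [hsum]
      have hfac : ∀ i, (0:ℝ) < 1 - η * (ℓ t i - m t) := by
        intro i
        have h1 := (hℓ t i).1; have h2 := (hℓ t i).2
        nlinarith
      constructor
      · intro i; rw [hupd]; exact mul_pos (hpos i) (hfac i)
      · have : ∀ i : Fin K, π (t+1) i = π t i - η * (π t i * ℓ t i) + η * m t * π t i := by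
          intro i; rw [hupd]; ring
        rw [Finset.sum_congr rfl fun i _ => this i]
        rw [Finset.sum_add_distrib, Finset.sum_sub_distrib, ← Finset.mul_sum, ← Finset.mul_sum]
        rw [hsum]
        show 1 - η * m t + η * m t * 1 = 1
        ring
  -- lower bound on π t istar
  set c : ℕ → ℝ := fun s => ℓ s istar - m s with hc
  have hcabs : ∀ s, |c s| ≤ 1 := by
    intro s
    have hm0 : 0 ≤ m s := Finset.sum_nonneg fun j _ =>
      mul_nonneg ((hinv s).1 j).le (hℓ s j).1
    have hm1 : m s ≤ 1 := by
      calc m s ≤ ∑ j, π s j * 1 :=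
            Finset.sum_le_sum fun j _ => mul_le_mul_of_nonneg_left (hℓ s j).2 ((hinv s).1 j).le
        _ = 1 := by simp [(hinv s).2]
    have h1 := (hℓ s istar).1; have h2 := (hℓ s istar).2
    rw [abs_le]; constructor <;> simp only [hc] <;> linarith
  have hlow : ∀ t, (1/K : ℝ) * Real.exp (-(∑ s ∈ Finset.range t, (η * c s + η^2 * (c s)^2)))
      ≤ π t istar := by
    intro t
    induction t with
    | zero => simp [hinit]
    | succ t ih =>
      have hx : |η * c t| ≤ 1/2 := by
        rw [abs_mul, abs_of_pos hη0]
        calc η * |c t| ≤ η * 1 := mul_le_mul_of_nonneg_left (hcabs t) hη0.le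
          _ ≤ 1/2 := by linarith
      have hexp := wsu_key_exp hx
      have hπpos := (hinv t).1 istar
      rw [hupd]
      have heq : (-(∑ s ∈ Finset.range (t+1), (η * c s + η^2 * (c s)^2)))
          = (-(∑ s ∈ Finset.range t, (η * c s + η^2 * (c s)^2))) + (-(η * c t) - (η * c t)^2) := by
        rw [Finset.sum_range_succ]; ring
      rw [heq, Real.exp_add, ← mul_assoc]
      exact mul_le_mul ih hexp (Real.exp_pos _).le hπpos.le
  -- π T istar ≤ 1
  have hle1 : π T istar ≤ 1 := by
    rw [← (hinv T).2]
    exact Finset.single_le_sum (fun i _ => ((hinv T).1 i).le) (Finset.mem_univ istar)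
  -- conclude sum bound
  set S := ∑ s ∈ Finset.range T, (η * c s + η^2 * (c s)^2) with hS
  have h1 : (1/K : ℝ) * Real.exp (-S) ≤ 1 := le_trans (hlow T) hle1
  have h2 : Real.exp (-S) ≤ K := by
    rw [div_mul_eq_mul_div, one_mul, div_le_one hK0] at h1
    exact h1
  have h3 : -S ≤ Real.log K := (Real.le_log_iff_exp_le hK0).2 h2
  -- bound on sum of squares
  have hsq : ∑ s ∈ Finset.range T, (c s)^2 ≤ T := by
    calc ∑ s ∈ Finset.range T, (c s)^2 ≤ ∑ s ∈ Finset.range T, 1 := by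
          refine Finset.sum_le_sum fun s _ => ?_
          have := hcabs s
          nlinarith [abs_nonneg (c s), sq_abs (c s)]
      _ = T := by simp
  -- regret computation
  have hreg : η * (∑ t ∈ Finset.range T, m t - ∑ t ∈ Finset.range T, ℓ t istar)
      ≤ Real.log K + η^2 * T := by
    have hexpand : S = η * (∑ s ∈ Finset.range T, c s)
        + η^2 * ∑ s ∈ Finset.range T, (c s)^2 := by
      rw [hS, Finset.sum_add_distrib, ← Finset.mul_sum, ← Finset.mul_sum]
    have hcs : ∑ s ∈ Finset.range T, c s
        = ∑ t ∈ Finset.range T, ℓ t istar - ∑ t ∈ Finset.range T, m t := by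
      simp only [hc, Finset.sum_sub_distrib]
    have h4 : η^2 * ∑ s ∈ Finset.range T, (c s)^2 ≤ η^2 * T :=
      mul_le_mul_of_nonneg_left hsq (sq_nonneg η)
    rw [hexpand, hcs] at h3
    nlinarith
  have hfinal : ∑ t ∈ Finset.range T, m t - ∑ t ∈ Finset.range T, ℓ t istar ≤ 2 * (η * T) := by
    rw [hlogeq] at hreg
    have : η * (∑ t ∈ Finset.range T, m t - ∑ t ∈ Finset.range T, ℓ t istar)
        ≤ η * (2 * (η * T)) := by nlinarith
    exact le_of_mul_le_mul_left this hη0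
  have hsqrt : Real.sqrt (T * Real.log K) = η * T := by
    have : (T:ℝ) * Real.log K = (η * T)^2 := by
      rw [hlogeq]; ring
    rw [this, Real.sqrt_sq (by positivity)]
  rw [hsqrt]
  linarith [hfinal]
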